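/- Let X and Y be Polish spaces, let ε > 0, and let c : X × Y → ℝ be a measurable cost function that is bounded from below. Let μ̃ be a probability measure on X and let F be a class of measurable functions φ : X → [−∞, ∞) satisfying 0 < ∫_X exp(φ/ε) dμ̃ < ∞ for every φ ∈ F. Then for the (c,ε)-transformed class F^{(c,ε),μ̃} := { φ^{(c,ε),μ̃} : φ ∈ F } and every δ > 0 one has N(δ, F^{(c,ε),μ̃}, ‖·‖_∞) ≤ N(δ/2, F, ‖·‖_∞). -/

import Mathlib

open MeasureTheory ProbabilityTheory Real
open scoped ENNReal NNReal BigOperators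

noncomputable section

namespace EOTLCA

variable {X Y Z Ω : Type*}

/-- The set of couplings of `μ` and `ν`. -/
def couplings [MeasurableSpace X] [MeasurableSpace Y] (μ : Measure X) (ν : Measure Y) :
    Set (Measure (X × Y)) :=
  {pl | IsProbabilityMeasure pl ∧ pl.fst = μ ∧ pl.snd = ν}

open Classical in
/-- Kullback-Leibler divergence of `pl` with respect to `ρ`. -/
def KLdiv [MeasurableSpace Z] (pl ρ : Measure Z) : EReal :=
  if pl ≪ ρ then (((∫ z, Real.log (pl.rnDeriv ρ z).toReal ∂pl) : ℝ) : EReal) else ⊤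

/-- The entropic optimal transport cost with cost `c` and regularization parameter `ε`. -/
def EOT [MeasurableSpace X] [MeasurableSpace Y] (c : X → Y → ℝ) (ε : ℝ)
    (μ : Measure X) (ν : Measure Y) : EReal :=
  ⨅ pl ∈ couplings μ ν,
    (((∫ p, c p.1 p.2 ∂pl) : ℝ) : EReal) + (ε : EReal) * KLdiv pl (μ.prod ν)

/-- Entropic `(c,ε)`-transform of `φ : X → ℝ` with respect to the measure `ξ` on `X`;
the result is a function on `Y`. -/
def entTrans [MeasurableSpace X] (c : X → Y → ℝ) (ε : ℝ) (ξ : Measure X) (φ : X → ℝ) :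
    Y → ℝ :=
  fun y => -ε * Real.log (∫ x, Real.exp ((φ x - c x y) / ε) ∂ξ)

/-- The dual function class `F_{c,ε}`: functions `φ : X → ℝ` which arise as the entropic
`(c,ε)`-transform of some `ψ : Y → ℝ` with respect to some probability measure on `Y`,
with `‖φ‖_∞, ‖ψ‖_∞ ≤ 3/2`. -/
def Fclass [MeasurableSpace X] [MeasurableSpace Y] (c : X → Y → ℝ) (ε : ℝ) : Set (X → ℝ) :=
  {φ | ∃ ξ : Measure Y, IsProbabilityMeasure ξ ∧ ∃ ψ : Y → ℝ, Measurable ψ ∧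
      φ = entTrans (Function.swap c) ε ξ ψ ∧ (∀ x, |φ x| ≤ 3 / 2) ∧ (∀ y, |ψ y| ≤ 3 / 2)}

/-- Empirical measure of the first `n` values of the sequence `xs`. -/
def empMeas [MeasurableSpace Z] (n : ℕ) (xs : ℕ → Z) : Measure Z :=
  (n : ℝ≥0∞)⁻¹ • ∑ i ∈ Finset.range n, Measure.dirac (xs i)

/-- Uniform covering number of a class `F` of real functions, at scale `δ`, with respect to the
supremum norm over the set `S`. -/
def coverNumOn (δ : ℝ) (S : Set Z) (F : Set (Z → ℝ)) : ℝ≥0∞ :=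
  sInf ((fun T : Finset (Z → ℝ) => (T.card : ℝ≥0∞)) ''
    {T | ∀ f ∈ F, ∃ g ∈ T, ∀ z ∈ S, |f z - g z| ≤ δ})

/-- Uniform covering number of a class of real functions at scale `δ`. -/
def coverNum (δ : ℝ) (F : Set (Z → ℝ)) : ℝ≥0∞ := coverNumOn δ Set.univ F

/-- `xs` is an i.i.d. sample from `μ`, on the probability space `(Ω, P)`. -/
def IIDSamples [MeasurableSpace Z] [MeasurableSpace Ω] (P : Measure Ω) (μ : Measure Z)
    (xs : ℕ → Ω → Z) : Prop :=
  (∀ i, Measurable (xs i)) ∧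
    iIndepFun xs P ∧ ∀ i, P.map (xs i) = μ

open Classical in
/-- `exp(t/ε)` for an extended-real `t ∈ [-∞, ∞)`, with `exp(-∞/ε) = 0`. -/
def expScale (ε : ℝ) (t : EReal) : ℝ := if t = ⊥ then 0 else Real.exp (t.toReal / ε)

/-- Entropic `(c,ε)`-transform of a `[-∞,∞)`-valued function `φ : X → EReal` with respect to
the measure `ξ` on `X`; the result is a function on `Y`. -/
def entTransE [MeasurableSpace X] (c : X → Y → ℝ) (ε : ℝ) (ξ : Measure X) (φ : X → EReal) :
    Y → ℝ :=
  fun y => -ε * Real.log (∫ x, expScale ε (φ x - (c x y : EReal)) ∂ξ)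

/-- Uniform covering number for classes of `EReal`-valued functions. -/
def coverNumE (δ : ℝ) (F : Set (Z → EReal)) : ℝ≥0∞ :=
  sInf ((fun T : Finset (Z → EReal) => (T.card : ℝ≥0∞)) ''
    {T | ∀ f ∈ F, ∃ g ∈ T, ∀ z, max (f z - g z) (g z - f z) ≤ (δ : EReal)})


lemma expScale_nonneg (ε : ℝ) (t : EReal) : 0 ≤ expScale ε t := by
  unfold expScale; split
  · exact le_refl 0
  · exact (Real.exp_pos _).le

lemma expScale_sub_coe (ε : ℝ) {a : EReal} (ha : a ≠ ⊤) (r : ℝ) :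
    expScale ε (a - (r : EReal)) = Real.exp (-r / ε) * expScale ε a := by
  induction a using EReal.rec with
  | bot => simp [expScale]
  | coe x =>
    have h1 : ((x:EReal) - (r:EReal)) = ((x - r : ℝ) : EReal) := by norm_cast
    simp only [expScale, h1]
    rw [if_neg (EReal.coe_ne_bot _), if_neg (EReal.coe_ne_bot _),
      EReal.toReal_coe, EReal.toReal_coe, ← Real.exp_add]
    congr 1; ring
  | top => exact absurd rfl ha

lemma expScale_le_of_close {ε : ℝ} (hε : 0 < ε) {δ : ℝ} {a b : EReal} (ha : a ≠ ⊤) (hb : b ≠ ⊤)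
    (hbot : a = ⊥ ↔ b = ⊥) (hclose : a ≠ ⊥ → a.toReal ≤ b.toReal + δ) :
    expScale ε a ≤ Real.exp (δ / ε) * expScale ε b := by
  by_cases h : a = ⊥
  · simp [expScale, h, hbot.mp h]
  · have hb' : b ≠ ⊥ := fun h0 => h (hbot.mpr h0)
    unfold expScale
    rw [if_neg h, if_neg hb', ← Real.exp_add]
    apply Real.exp_le_exp.mpr
    rw [← add_div]
    exact (div_le_div_iff_of_pos_right hε).mpr (by linarith [hclose h])

lemma cover_pt {δ : ℝ} {a b : EReal} (ha : a ≠ ⊤)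
    (h : max (a - b) (b - a) ≤ (δ : EReal)) :
    b ≠ ⊤ ∧ (a = ⊥ ↔ b = ⊥) ∧ (a ≠ ⊥ → |a.toReal - b.toReal| ≤ δ) := by
  rw [max_le_iff] at h
  obtain ⟨h1, h2⟩ := h
  induction a using EReal.rec with
  | top => exact absurd rfl ha
  | bot =>
    induction b using EReal.rec with
    | bot => simp
    | coe y => simp at h2
    | top => simp at h2
  | coe x =>
    induction b using EReal.rec with
    | bot => simp at h1
    | top => simp at h2
    | coe y =>
      refine ⟨EReal.coe_ne_top y, by simp, fun _ => ?_⟩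
      rw [EReal.toReal_coe, EReal.toReal_coe, abs_sub_le_iff]
      constructor
      · exact_mod_cast h1
      · exact_mod_cast h2

lemma entTransE_close {X Y : Type*} [MeasurableSpace X] [MeasurableSpace Y]
    {ε : ℝ} (hε : 0 < ε) {δ : ℝ} (hδ : 0 < δ)
    {c : X → Y → ℝ} (hc : Measurable (Function.uncurry c))
    {L : ℝ} (hL : ∀ x y, L ≤ c x y)
    (μ' : Measure X) (φ ψ : X → EReal)
    (hφt : ∀ x, φ x ≠ ⊤) (hψt : ∀ x, ψ x ≠ ⊤)
    (hφi : Integrable (fun x => expScale ε (φ x)) μ')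
    (hψi : Integrable (fun x => expScale ε (ψ x)) μ')
    (hbot : ∀ x, (φ x = ⊥ ↔ ψ x = ⊥))
    (hclose : ∀ x, φ x ≠ ⊥ → |(φ x).toReal - (ψ x).toReal| ≤ δ)
    (y : Y) : |entTransE c ε μ' φ y - entTransE c ε μ' ψ y| ≤ δ := by
  have hmc : Measurable fun x => c x y := hc.comp (measurable_id.prodMk measurable_const)
  set f : X → ℝ := fun x => Real.exp (-(c x y) / ε) * expScale ε (φ x) with hf
  set g : X → ℝ := fun x => Real.exp (-(c x y) / ε) * expScale ε (ψ x) with hg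
  have hrwφ : entTransE c ε μ' φ y = -ε * Real.log (∫ x, f x ∂μ') := by
    unfold entTransE
    rw [integral_congr_ae (Filter.Eventually.of_forall fun x => expScale_sub_coe ε (hφt x) (c x y))]
  have hrwψ : entTransE c ε μ' ψ y = -ε * Real.log (∫ x, g x ∂μ') := by
    unfold entTransE
    rw [integral_congr_ae (Filter.Eventually.of_forall fun x => expScale_sub_coe ε (hψt x) (c x y))]
  have hexpmono : ∀ x, Real.exp (-(c x y) / ε) ≤ Real.exp (-L / ε) := fun x =>
    Real.exp_le_exp.mpr ((div_le_div_iff_of_pos_right hε).mpr (by linarith [hL x y]))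
  have hfm : AEStronglyMeasurable f μ' :=
    ((hmc.neg.div_const ε).exp.aestronglyMeasurable.mul hφi.1)
  have hgm : AEStronglyMeasurable g μ' :=
    ((hmc.neg.div_const ε).exp.aestronglyMeasurable.mul hψi.1)
  have hbound : ∀ (p : X → EReal), ∀ x, |Real.exp (-(c x y) / ε) * expScale ε (p x)|
      ≤ |Real.exp (-L / ε) * expScale ε (p x)| := by
    intro p x
    rw [abs_of_nonneg (mul_nonneg (Real.exp_pos _).le (expScale_nonneg _ _)), abs_of_nonneg (mul_nonneg (Real.exp_pos _).le (expScale_nonneg _ _))]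
    exact mul_le_mul_of_nonneg_right (hexpmono x) (expScale_nonneg ε (p x))
  have hfi : Integrable f μ' := (hφi.const_mul (Real.exp (-L/ε))).mono hfm
    (Filter.Eventually.of_forall (hbound φ))
  have hgi : Integrable g μ' := (hψi.const_mul (Real.exp (-L/ε))).mono hgm
    (Filter.Eventually.of_forall (hbound ψ))
  have hptle : ∀ (p q : X → EReal), (∀ x, p x ≠ ⊤) → (∀ x, q x ≠ ⊤) →
      (∀ x, (p x = ⊥ ↔ q x = ⊥)) → (∀ x, p x ≠ ⊥ → (p x).toReal ≤ (q x).toReal + δ) →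
      ∀ x, Real.exp (-(c x y) / ε) * expScale ε (p x)
        ≤ Real.exp (δ / ε) * (Real.exp (-(c x y) / ε) * expScale ε (q x)) := by
    intro p q hpt hqt hb hcl x
    rw [mul_left_comm]
    exact mul_le_mul_of_nonneg_left
      (expScale_le_of_close hε (hpt x) (hqt x) (hb x) (hcl x)) (Real.exp_pos _).le
  have h12 : ∫ x, f x ∂μ' ≤ Real.exp (δ / ε) * ∫ x, g x ∂μ' := by
    rw [← integral_const_mul]
    refine integral_mono_of_nonneg
      (Filter.Eventually.of_forall fun x => mul_nonneg (Real.exp_pos _).le (expScale_nonneg _ _))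
      (hgi.const_mul _) (Filter.Eventually.of_forall ?_)
    exact hptle φ ψ hφt hψt hbot fun x hx => by linarith [abs_le.mp (hclose x hx) |>.1, abs_le.mp (hclose x hx) |>.2]
  have h21 : ∫ x, g x ∂μ' ≤ Real.exp (δ / ε) * ∫ x, f x ∂μ' := by
    rw [← integral_const_mul]
    refine integral_mono_of_nonneg
      (Filter.Eventually.of_forall fun x => mul_nonneg (Real.exp_pos _).le (expScale_nonneg _ _))
      (hfi.const_mul _) (Filter.Eventually.of_forall ?_)
    refine hptle ψ φ hψt hφt (fun x => (hbot x).symm) fun x hx => ?_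
    have hφx : φ x ≠ ⊥ := fun h0 => hx ((hbot x).mp h0)
    linarith [abs_le.mp (hclose x hφx) |>.1, abs_le.mp (hclose x hφx) |>.2]
  have hI0 : 0 ≤ ∫ x, f x ∂μ' :=
    integral_nonneg fun x => mul_nonneg (Real.exp_pos _).le (expScale_nonneg _ _)
  have hJ0 : 0 ≤ ∫ x, g x ∂μ' :=
    integral_nonneg fun x => mul_nonneg (Real.exp_pos _).le (expScale_nonneg _ _)
  rw [hrwφ, hrwψ]
  rcases hI0.eq_or_lt with hI | hI
  · have hJ : ∫ x, g x ∂μ' = 0 := le_antisymm (by nlinarith [Real.exp_pos (δ/ε)]) hJ0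
    rw [← hI, hJ, Real.log_zero]
    simpa using hδ.le
  · have hJ : 0 < ∫ x, g x ∂μ' := by
      rcases hJ0.eq_or_lt with hJ | hJ
      · exfalso; nlinarith [Real.exp_pos (δ/ε)]
      · exact hJ
    have l1 : Real.log (∫ x, f x ∂μ') ≤ δ/ε + Real.log (∫ x, g x ∂μ') := by
      calc Real.log (∫ x, f x ∂μ') ≤ Real.log (Real.exp (δ/ε) * ∫ x, g x ∂μ') := by
            apply Real.log_le_log hI h12
        _ = δ/ε + Real.log (∫ x, g x ∂μ') := by
            rw [Real.log_mul (Real.exp_ne_zero _) hJ.ne', Real.log_exp]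
    have l2 : Real.log (∫ x, g x ∂μ') ≤ δ/ε + Real.log (∫ x, f x ∂μ') := by
      calc Real.log (∫ x, g x ∂μ') ≤ Real.log (Real.exp (δ/ε) * ∫ x, f x ∂μ') := by
            apply Real.log_le_log hJ h21
        _ = δ/ε + Real.log (∫ x, f x ∂μ') := by
            rw [Real.log_mul (Real.exp_ne_zero _) hI.ne', Real.log_exp]
    rw [abs_le]
    have hεδ : ε * (δ/ε) = δ := mul_div_cancel₀ δ hε.ne'
    constructor <;> nlinarith [mul_le_mul_of_nonneg_left l1 hε.le, mul_le_mul_of_nonneg_left l2 hε.le]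

/-- Lemma `lemma:entt_cov_num`: the entropic `(c,ε)`-transform does not
increase the uniform metric entropy by more than passing from scale `δ` to scale `δ/2`. -/
theorem statement2
    {X Y : Type*} [MeasurableSpace X] [TopologicalSpace X] [BorelSpace X] [PolishSpace X]
    [MeasurableSpace Y] [TopologicalSpace Y] [BorelSpace Y] [PolishSpace Y]
    (ε : ℝ) (hε : 0 < ε) (c : X → Y → ℝ) (hc : Measurable (Function.uncurry c))
    (hclb : ∃ L : ℝ, ∀ x y, L ≤ c x y)
    (μ' : Measure X) [IsProbabilityMeasure μ']
    (F : Set (X → EReal))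
    (hF : ∀ φ ∈ F, Measurable φ ∧ (∀ x, φ x ≠ ⊤) ∧
      Integrable (fun x => expScale ε (φ x)) μ' ∧ 0 < ∫ x, expScale ε (φ x) ∂μ')
    (δ : ℝ) (hδ : 0 < δ) :
    coverNum δ ((fun φ => entTransE c ε μ' φ) '' F) ≤ coverNumE (δ / 2) F := by
  classical
  obtain ⟨L, hL⟩ := hclb
  rw [coverNum, coverNumOn, coverNumE]
  apply le_sInf
  rintro b ⟨T, hT, rfl⟩
  set P : (X → EReal) → Prop := fun g => ∃ ψ, ψ ∈ F ∧
    ∀ z, max (ψ z - g z) (g z - ψ z) ≤ ((δ/2 : ℝ) : EReal) with hPdef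
  set sel : (X → EReal) → (Y → ℝ) :=
    fun g => if h : P g then entTransE c ε μ' h.choose else fun _ => 0 with hseldef
  refine le_trans (sInf_le ⟨T.image sel, ?_, rfl⟩) ?_
  · rintro f ⟨φ, hφF, rfl⟩
    obtain ⟨g, hgT, hcov⟩ := hT φ hφF
    have hPg : P g := ⟨φ, hφF, hcov⟩
    refine ⟨sel g, Finset.mem_image_of_mem sel hgT, fun y _ => ?_⟩
    have hsg : sel g = entTransE c ε μ' hPg.choose := by
      simp only [hseldef]; rw [dif_pos hPg]
    rw [hsg]
    obtain ⟨hψF, hcov2⟩ := hPg.choose_spec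
    set ψ := hPg.choose with hψdef
    obtain ⟨hφm, hφt, hφi, -⟩ := hF φ hφF
    obtain ⟨hψm, hψt, hψi, -⟩ := hF ψ hψF
    refine entTransE_close hε hδ hc hL μ' φ ψ hφt hψt hφi hψi ?_ ?_ y
    · intro x
      exact ((cover_pt (hφt x) (hcov x)).2.1).trans ((cover_pt (hψt x) (hcov2 x)).2.1).symm
    · intro x hx
      have h1 := cover_pt (hφt x) (hcov x)
      have h2 := cover_pt (hψt x) (hcov2 x)
      have hψx : ψ x ≠ ⊥ := fun h0 => hx ((h1.2.1.trans h2.2.1.symm).mpr h0)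
      have e1 := h1.2.2 hx
      have e2 := h2.2.2 hψx
      calc |(φ x).toReal - (ψ x).toReal|
          ≤ |(φ x).toReal - (g x).toReal| + |(g x).toReal - (ψ x).toReal| := abs_sub_le _ _ _
        _ ≤ δ := by rw [abs_sub_comm ((g x).toReal)]; linarith
  · simp only []
    exact_mod_cast Finset.card_image_le


end EOTLCA
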